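/- Let Γ: ℝ₊ⁿ → ℝ₊ⁿ be monotone and suppose a function V: X → ℝ₊ⁿ (limit superior vector l of trajectory norms) satisfies l ≤ μ(Γ(l), v) where μᵢ(a,b) = a + b for i ∈ I_Σ and μᵢ(a,b) = max{a,b} for i ∈ I_max, with v ∈ ℝ₊ⁿ a fixed vector, and Γ∘D_α ≱ id holds on ℝ₊ⁿ \ {0} for some α ∈ K∞. Then |l|_max ≤ φ(|v|_max) for the K∞ function φ(r) := max component of [D̃∘μ(Γ,id)]ⁿ(r,…,r), where D̃ applies id + α⁻¹ on I_Σ coordinates and identity on I_max coordinates. In particular, if additionally v = 0, then l = 0. -/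

import Mathlib

open NNReal

/-- A function is of class K∞: continuous, strictly increasing, unbounded, and 0 at 0. -/
def KInf (f : ℝ≥0 → ℝ≥0) : Prop :=
  Continuous f ∧ StrictMono f ∧ f 0 = 0 ∧ ∀ M : ℝ≥0, ∃ r, M < f r

/-- Asymptotic gain bound: if the vector l of limsups satisfies l ≤ μ(Γ(l), v) and the
mixed small gain condition Γ∘D_α ≱ id holds, then |l|_max ≤ φ(|v|_max) with
φ(r) = max component of [D̃∘μ(Γ,id)]ⁿ(r,…,r); in particular v = 0 implies l = 0. -/
theorem limsup_bound (n : ℕ) (hn : 1 ≤ n) (Isum : Finset (Fin n))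
    (γ : Fin n → Fin n → ℝ≥0 → ℝ≥0)
    (hγ : ∀ i j, KInf (γ i j) ∨ γ i j = fun _ => 0)
    (hγdiag : ∀ i, γ i i = fun _ => 0)
    (α αinv : ℝ≥0 → ℝ≥0) (hα : KInf α)
    (hαinv : Function.LeftInverse αinv α ∧ Function.RightInverse αinv α)
    (Γ : (Fin n → ℝ≥0) → Fin n → ℝ≥0) (hΓmono : Monotone Γ)
    (hΓ : ∀ s i, Γ s i =
      if i ∈ Isum then ∑ j, γ i j (s j) else Finset.univ.sup fun j => γ i j (s j))
    (hsg : ∀ s : Fin n → ℝ≥0, s ≠ 0 →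
      ∃ i, Γ (fun j => if j ∈ Isum then s j + α (s j) else s j) i < s i)
    (μ : (Fin n → ℝ≥0) → (Fin n → ℝ≥0) → Fin n → ℝ≥0)
    (hμ : ∀ w v i, μ w v i = if i ∈ Isum then w i + v i else max (w i) (v i))
    (M : (Fin n → ℝ≥0) → Fin n → ℝ≥0)
    (hM : ∀ v i, M v i =
      if i ∈ Isum then μ (Γ v) v i + αinv (μ (Γ v) v i) else μ (Γ v) v i)
    (φ : ℝ≥0 → ℝ≥0)
    (hφ : ∀ r, φ r = Finset.univ.sup fun i => M^[n] (fun _ => r) i)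
    (l v : Fin n → ℝ≥0) (hl : l ≤ μ (Γ l) v) :
    Finset.univ.sup l ≤ φ (Finset.univ.sup v) ∧ (v = 0 → l = 0) := by
  classical
  have hγmono : ∀ i j, Monotone (γ i j) := by
    intro i j
    rcases hγ i j with h | h
    · exact h.2.1.monotone
    · rw [h]; exact monotone_const
  have hγ0 : ∀ i j, γ i j 0 = 0 := by
    intro i j
    rcases hγ i j with h | h
    · exact h.2.2.1
    · rw [h]
  have hα0 : α 0 = 0 := hα.2.2.1
  have hαinv0 : αinv 0 = 0 := by
    conv_lhs => rw [← hα0]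
    exact hαinv.1 0
  have hαinv_mono : Monotone αinv := fun a b hab =>
    hα.2.1.le_iff_le.mp (by rw [hαinv.2 a, hαinv.2 b]; exact hab)
  have hμ_ge_snd : ∀ w v' i, v' i ≤ μ w v' i := by
    intro w v' i
    rw [hμ]
    split
    · exact le_add_self
    · exact le_max_right _ _
  have hM_ge_μ : ∀ x i, μ (Γ x) x i ≤ M x i := by
    intro x i
    rw [hM]
    split
    · exact le_self_add
    · exact le_rfl
  have hM_ge : ∀ x, x ≤ M x := fun x i => le_trans (hμ_ge_snd (Γ x) x i) (hM_ge_μ x i)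
  -- key step lemma
  have key : ∀ b : Fin n → ℝ≥0, v ≤ b →
      ∀ S : Finset (Fin n), (∀ j ∈ S, l j ≤ b j) → S ≠ Finset.univ →
      ∃ i, i ∉ S ∧ l i ≤ M b i := by
    intro b hvb S hS hSuniv
    by_contra hcon
    push_neg at hcon
    set u : Fin n → ℝ≥0 := fun j => if j ∈ S then 0 else l j with hu
    have hsum_split : ∀ i, i ∈ Isum → Γ l i ≤ Γ u i + Γ b i := by
      intro i hi
      rw [hΓ l i, hΓ u i, hΓ b i, if_pos hi, if_pos hi, if_pos hi,
        ← Finset.sum_add_distrib]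
      refine Finset.sum_le_sum fun j _ => ?_
      by_cases hj : j ∈ S
      · exact (hγmono i j (hS j hj)).trans (le_add_self)
      · have : u j = l j := by rw [hu]; simp [hj]
        rw [this]
        exact le_self_add
    have hmax_split : ∀ i, i ∉ Isum → Γ l i ≤ max (Γ u i) (Γ b i) := by
      intro i hi
      rw [hΓ l i, if_neg hi]
      refine Finset.sup_le fun j _ => ?_
      by_cases hj : j ∈ S
      · have hb1 : γ i j (b j) ≤ Γ b i := by
          rw [hΓ b i, if_neg hi]
          exact Finset.le_sup (f := fun j => γ i j (b j)) (Finset.mem_univ j)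
        exact le_trans (hγmono i j (hS j hj)) (hb1.trans (le_max_right _ _))
      · have huj : γ i j (l j) = γ i j (u j) := by rw [hu]; simp [hj]
        have hb1 : γ i j (u j) ≤ Γ u i := by
          rw [hΓ u i, if_neg hi]
          exact Finset.le_sup (f := fun j => γ i j (u j)) (Finset.mem_univ j)
        rw [huj]
        exact hb1.trans (le_max_left _ _)
    have hub : ∀ i, u i ≤ (if i ∈ Isum then Γ u i + α (Γ u i) else Γ u i) := by
      intro i
      by_cases hiS : i ∈ S
      · have : u i = 0 := by rw [hu]; simp [hiS]
        rw [this]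
        exact zero_le
      · have hMlt := hcon i hiS
        have hli := hl i
        rw [hμ (Γ l) v i] at hli
        have hui : u i = l i := by rw [hu]; simp [hiS]
        rw [hui]
        by_cases hi : i ∈ Isum
        · rw [if_pos hi] at hli ⊢
          have h1 : l i ≤ Γ u i + (Γ b i + b i) := by
            calc l i ≤ Γ l i + v i := hli
              _ ≤ (Γ u i + Γ b i) + b i := add_le_add (hsum_split i hi) (hvb i)
              _ = Γ u i + (Γ b i + b i) := add_assoc _ _ _
          by_cases hcase : Γ b i + b i ≤ α (Γ u i)
          · exact h1.trans (add_le_add_right hcase _)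
          · push_neg at hcase
            have h2 : Γ u i < αinv (Γ b i + b i) := by
              have hiff := hα.2.1.lt_iff_lt (a := Γ u i) (b := αinv (Γ b i + b i))
              rw [hαinv.2 (Γ b i + b i)] at hiff
              exact hiff.mp hcase
            have h3 : l i < M b i := by
              rw [hM b i, if_pos hi, hμ (Γ b) b i, if_pos hi]
              calc l i ≤ Γ u i + (Γ b i + b i) := h1
                _ < αinv (Γ b i + b i) + (Γ b i + b i) := add_lt_add_left h2 _
                _ = (Γ b i + b i) + αinv (Γ b i + b i) := add_comm _ _
            exact absurd h3 (lt_asymm hMlt)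
        · rw [if_neg hi] at hli ⊢
          have hMeq : M b i = max (Γ b i) (b i) := by
            rw [hM b i, if_neg hi, hμ (Γ b) b i, if_neg hi]
          rcases le_max_iff.mp hli with h | h
          · rcases le_max_iff.mp (h.trans (hmax_split i hi)) with h2 | h2
            · exact h2
            · exfalso
              have : l i ≤ M b i := by rw [hMeq]; exact h2.trans (le_max_left _ _)
              exact absurd this (not_le.mpr hMlt)
          · exfalso
            have : l i ≤ M b i := by
              rw [hMeq]; exact (h.trans (hvb i)).trans (le_max_right _ _)
            exact absurd this (not_le.mpr hMlt)
    obtain ⟨i0, hi0⟩ : ∃ i0, i0 ∉ S := by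
      by_contra h
      push_neg at h
      exact hSuniv (Finset.eq_univ_iff_forall.mpr h)
    have hu0 : 0 < u i0 := by
      have : u i0 = l i0 := by rw [hu]; simp [hi0]
      rw [this]
      exact lt_of_le_of_lt zero_le (hcon i0 hi0)
    set t : Fin n → ℝ≥0 := Γ u with ht
    have ht2 : ∀ i, t i ≤ Γ (fun j => if j ∈ Isum then t j + α (t j) else t j) i :=
      fun i => hΓmono (fun j => hub j) i
    have htne : t ≠ 0 := by
      intro h0
      have h1 := hub i0
      rw [h0] at h1
      simp only [Pi.zero_apply, hα0, add_zero, ite_self] at h1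
      exact absurd h1 (not_le.mpr hu0)
    obtain ⟨i, hi⟩ := hsg t htne
    exact absurd (ht2 i) (not_le.mpr hi)
  -- iteration
  set vb : Fin n → ℝ≥0 := fun _ => Finset.univ.sup v with hvb_def
  have hv_le_vb : v ≤ vb := fun i => Finset.le_sup (Finset.mem_univ i)
  have hb_mono : ∀ k, M^[k] vb ≤ M^[k + 1] vb := by
    intro k
    rw [Function.iterate_succ_apply']
    exact hM_ge _
  have hv_le_bk : ∀ k, v ≤ M^[k] vb := by
    intro k
    induction k with
    | zero => simpa using hv_le_vb
    | succ k ih => exact ih.trans (hb_mono k)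
  have main : ∀ k, ∃ S : Finset (Fin n),
      min k n ≤ S.card ∧ ∀ j ∈ S, l j ≤ M^[k] vb j := by
    intro k
    induction k with
    | zero => exact ⟨∅, by simp, by simp⟩
    | succ k ih =>
      obtain ⟨S, hcard, hbound⟩ := ih
      by_cases hSu : S = Finset.univ
      · refine ⟨Finset.univ, ?_, ?_⟩
        · rw [Finset.card_fin]
          exact min_le_right _ _
        · intro j _
          exact (hbound j (by rw [hSu]; exact Finset.mem_univ j)).trans (hb_mono k j)
      · obtain ⟨i, hiS, hile⟩ := key (M^[k] vb) (hv_le_bk k) S hbound hSu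
        refine ⟨insert i S, ?_, ?_⟩
        · rw [Finset.card_insert_of_notMem hiS]
          omega
        · intro j hj
          rcases Finset.mem_insert.mp hj with rfl | hj
          · rw [Function.iterate_succ_apply']
            exact hile
          · exact (hbound j hj).trans (hb_mono k j)
  obtain ⟨S, hcard, hbound⟩ := main n
  have hcard' : n ≤ S.card := by simpa using hcard
  have hSuniv : S = Finset.univ := by
    apply Finset.eq_univ_of_card
    rw [Fintype.card_fin]
    refine le_antisymm ?_ hcard'
    calc S.card ≤ Finset.univ.card := Finset.card_le_univ S
      _ = n := Finset.card_fin n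
  have hall : ∀ i, l i ≤ M^[n] vb i := fun i =>
    hbound i (by rw [hSuniv]; exact Finset.mem_univ i)
  have hfirst : Finset.univ.sup l ≤ φ (Finset.univ.sup v) := by
    rw [hφ]
    exact Finset.sup_le fun i _ => (hall i).trans (Finset.le_sup (Finset.mem_univ i))
  refine ⟨hfirst, fun hv0 => ?_⟩
  subst hv0
  have hsup0 : Finset.univ.sup (0 : Fin n → ℝ≥0) = 0 :=
    le_antisymm (Finset.sup_le fun i _ => le_rfl) zero_le
  have hΓ0 : Γ 0 = 0 := by
    funext i
    rw [hΓ 0 i]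
    simp only [Pi.zero_apply]
    refine le_antisymm ?_ zero_le
    split
    · exact le_of_eq (Finset.sum_eq_zero fun j _ => hγ0 i j)
    · exact Finset.sup_le fun j _ => le_of_eq (hγ0 i j)
  have hM0 : M 0 = 0 := by
    funext i
    rw [hM 0 i, hΓ0, hμ 0 0 i]
    simp [hαinv0]
  have hMn0 : M^[n] 0 = 0 := Function.iterate_fixed hM0 n
  have hl0 : ∀ i, l i ≤ 0 := by
    intro i
    have h1 : l i ≤ Finset.univ.sup l := Finset.le_sup (Finset.mem_univ i)
    have h2 := hfirst
    rw [hsup0, hφ] at h2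
    have h3 : (Finset.univ.sup fun i => M^[n] (fun _ => (0 : ℝ≥0)) i) = 0 := by
      refine le_antisymm (Finset.sup_le fun j _ => ?_) zero_le
      have he : M^[n] (fun _ => (0 : ℝ≥0)) = 0 := hMn0
      rw [he]
      exact le_rfl
    rw [h3] at h2
    exact h1.trans h2
  funext i
  exact le_antisymm (hl0 i) zero_le
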